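/- For d = 4 and all natural numbers u, Σ_{i=0}^{4} (−1)^i C(u,i)·C(7u, 4−i) = 54u⁴ − 72u³ + 20u² − 2u. -/

import Mathlib

lemma choose_two_mul (u : ℕ) : ((u.choose 2 : ℤ)) * 2 = u * (u - 1) := by
  induction u with
  | zero => norm_num
  | succ n ih =>
    rw [Nat.choose_succ_succ, Nat.choose_one_right]
    push_cast
    linear_combination ih

lemma choose_three_mul (u : ℕ) : ((u.choose 3 : ℤ)) * 6 = u * (u - 1) * (u - 2) := by
  induction u with
  | zero => norm_num
  | succ n ih =>
    rw [Nat.choose_succ_succ]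
    push_cast
    linear_combination ih + 3 * choose_two_mul n

lemma choose_four_mul (u : ℕ) :
    ((u.choose 4 : ℤ)) * 24 = u * (u - 1) * (u - 2) * (u - 3) := by
  induction u with
  | zero => norm_num
  | succ n ih =>
    rw [Nat.choose_succ_succ]
    push_cast
    linear_combination ih + 4 * choose_three_mul n

/-- For `d = 4`:
`Σ_{i=0}^{4} (-1)^i C(u,i)·C(7u, 4-i) = 54u⁴ - 72u³ + 20u² - 2u`. -/
theorem macdonald_specialized_d_four (u : ℕ) :
    ∑ i ∈ Finset.range 5,
        (-1 : ℤ) ^ i * (u.choose i) * ((7 * u).choose (4 - i)) =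
      54 * (u : ℤ) ^ 4 - 72 * (u : ℤ) ^ 3 + 20 * (u : ℤ) ^ 2 - 2 * u := by
  have e1 := choose_four_mul (7 * u)
  have e2 := choose_three_mul (7 * u)
  have e3 := choose_two_mul (7 * u)
  have e4 := choose_two_mul u
  have e5 := choose_three_mul u
  have e6 := choose_four_mul u
  push_cast at e1 e2 e3 e4 e5 e6
  have key : (24 : ℤ) * (∑ i ∈ Finset.range 5,
      (-1 : ℤ) ^ i * (u.choose i) * ((7 * u).choose (4 - i))) =
      24 * (54 * (u : ℤ) ^ 4 - 72 * (u : ℤ) ^ 3 + 20 * (u : ℤ) ^ 2 - 2 * u) := by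
    simp only [Finset.sum_range_succ, Finset.sum_range_zero,
      show (4:ℕ) - 1 = 3 from rfl, show (4:ℕ) - 2 = 2 from rfl,
      show (4:ℕ) - 3 = 1 from rfl, show (4:ℕ) - 4 = 0 from rfl,
      Nat.choose_zero_right, Nat.choose_one_right]
    push_cast
    linear_combination e1 - 4 * (u : ℤ) * e2 + 12 * ((u.choose 2 : ℤ)) * e3 +
      42 * (u : ℤ) * (7 * (u : ℤ) - 1) * e4 - 28 * (u : ℤ) * e5 + e6
  linarith [key]
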